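/- Let ℓ ≥ 2 and 1 ≤ a ≤ ℓ - 1 be integers, and define c : {0, 1, …, ℓ} → ℤ by c(i) = a·i for 0 ≤ i ≤ ℓ - a and c(i) = (ℓ - a)·(ℓ - i) for ℓ - a ≤ i ≤ ℓ. Then 2·∑_{i=1}^{ℓ-1} c(i)² − 2·∑_{i=1}^{ℓ-2} c(i)·c(i+1) = ℓ·a·(ℓ - a). -/
import Mathlib


open Finset

/-- The quadratic identity computing the self-intersection of the vanishing divisor
of the universal `ℓ`-th root homomorphism along a chain of `(-2)`-curves. -/
theorem chain_selfintersection_identity (ℓ a : ℤ) (hℓ : 2 ≤ ℓ) (ha : 1 ≤ a)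
    (ha' : a ≤ ℓ - 1)
    (c : ℤ → ℤ)
    (hc : ∀ i, 0 ≤ i → i ≤ ℓ →
      c i = if i ≤ ℓ - a then a * i else (ℓ - a) * (ℓ - i)) :
    2 * (∑ i ∈ Finset.Icc 1 (ℓ - 1), (c i) ^ 2)
      - 2 * (∑ i ∈ Finset.Icc 1 (ℓ - 2), c i * c (i + 1)) = ℓ * a * (ℓ - a) := by
  set b := ℓ - a with hb
  have hc0 : c 0 = 0 := by
    have h := hc 0 le_rfl (by omega)
    rw [if_pos (by omega)] at h; simpa using h
  have hcl : c ℓ = 0 := by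
    have h := hc ℓ (by omega) le_rfl
    rw [if_neg (by omega)] at h; simpa using h
  -- the increments
  have hA : ∀ i ∈ Finset.Icc (0:ℤ) (b-1), (c (i+1) - c i)^2 = a^2 := by
    intro i hi
    simp only [Finset.mem_Icc] at hi
    have h1 := hc i (by omega) (by omega)
    have h2 := hc (i+1) (by omega) (by omega)
    rw [if_pos (by omega)] at h1
    rw [if_pos (by omega)] at h2
    rw [h1, h2]; ring
  have hB : ∀ i ∈ Finset.Icc b (ℓ-1), (c (i+1) - c i)^2 = b^2 := by
    intro i hi
    simp only [Finset.mem_Icc] at hi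
    have h1 := hc i (by omega) (by omega)
    have h2 := hc (i+1) (by omega) (by omega)
    rw [if_neg (by omega)] at h2
    rcases eq_or_lt_of_le hi.1 with h | h
    · rw [if_pos (by omega)] at h1
      rw [h1, h2, ← h, hb]; ring
    · rw [if_neg (by omega)] at h1
      rw [h1, h2]; ring
  -- the telescoped sum, computed from the increments
  have hsplit : Finset.Icc (0:ℤ) (ℓ-1) = Finset.Icc 0 (b-1) ∪ Finset.Icc b (ℓ-1) := by
    ext x; simp only [Finset.mem_Icc, Finset.mem_union]; omega
  have hdisj : Disjoint (Finset.Icc (0:ℤ) (b-1)) (Finset.Icc b (ℓ-1)) := by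
    rw [Finset.disjoint_left]
    intro x hx hx'
    simp only [Finset.mem_Icc] at hx hx'; omega
  have hS : ∑ i ∈ Finset.Icc (0:ℤ) (ℓ-1), (c (i+1) - c i)^2 = ℓ * a * (ℓ - a) := by
    rw [hsplit, Finset.sum_union hdisj, Finset.sum_congr rfl hA, Finset.sum_congr rfl hB,
      Finset.sum_const, Finset.sum_const, Int.card_Icc, Int.card_Icc,
      nsmul_eq_mul, nsmul_eq_mul]
    have e1 : ((b - 1 + 1 - 0).toNat : ℤ) = b := by omega
    have e2 : ((ℓ - 1 + 1 - b).toNat : ℤ) = a := by omega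
    rw [e1, e2, hb]; ring
  -- the telescoped sum, expanded
  have shift : ∀ f : ℤ → ℤ, ∑ i ∈ Finset.Icc (0:ℤ) (ℓ-1), f (i+1)
      = ∑ i ∈ Finset.Icc (1:ℤ) ℓ, f i := by
    intro f
    have himg : Finset.Icc (1:ℤ) ℓ = Finset.image (· + 1) (Finset.Icc 0 (ℓ-1)) := by
      ext x; simp only [Finset.mem_Icc, Finset.mem_image]
      constructor
      · intro hx; exact ⟨x - 1, by omega, by ring⟩
      · rintro ⟨y, hy, rfl⟩; omega
    rw [himg, Finset.sum_image (fun x _ y _ h => by omega)]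
  have ins1 : Finset.Icc (1:ℤ) ℓ = insert ℓ (Finset.Icc 1 (ℓ-1)) := by
    ext x; simp only [Finset.mem_Icc, Finset.mem_insert]; omega
  have ins2 : Finset.Icc (0:ℤ) (ℓ-1) = insert 0 (Finset.Icc 1 (ℓ-1)) := by
    ext x; simp only [Finset.mem_Icc, Finset.mem_insert]; omega
  have ins3 : Finset.Icc (1:ℤ) (ℓ-1) = insert (ℓ-1) (Finset.Icc 1 (ℓ-2)) := by
    ext x; simp only [Finset.mem_Icc, Finset.mem_insert]; omega
  have nm1 : (ℓ:ℤ) ∉ Finset.Icc (1:ℤ) (ℓ-1) := by simp only [Finset.mem_Icc]; omega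
  have nm2 : (0:ℤ) ∉ Finset.Icc (1:ℤ) (ℓ-1) := by simp only [Finset.mem_Icc]; omega
  have nm3 : (ℓ-1:ℤ) ∉ Finset.Icc (1:ℤ) (ℓ-2) := by simp only [Finset.mem_Icc]; omega
  have hclm : c (ℓ - 1 + 1) = 0 := by rw [show ℓ - 1 + 1 = ℓ by ring, hcl]
  have p1 : ∑ i ∈ Finset.Icc (1:ℤ) ℓ, (c i)^2 = ∑ i ∈ Finset.Icc (1:ℤ) (ℓ-1), (c i)^2 := by
    rw [ins1, Finset.sum_insert nm1, hcl]; ring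
  have p2 : ∑ i ∈ Finset.Icc (0:ℤ) (ℓ-1), (c i)^2 = ∑ i ∈ Finset.Icc (1:ℤ) (ℓ-1), (c i)^2 := by
    rw [ins2, Finset.sum_insert nm2, hc0]; ring
  have p3 : ∑ i ∈ Finset.Icc (0:ℤ) (ℓ-1), c i * c (i+1)
      = ∑ i ∈ Finset.Icc (1:ℤ) (ℓ-2), c i * c (i+1) := by
    rw [ins2, Finset.sum_insert nm2, ins3, Finset.sum_insert nm3, hc0, hclm]; ring
  have hexp : ∑ i ∈ Finset.Icc (0:ℤ) (ℓ-1), (c (i+1) - c i)^2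
      = 2 * (∑ i ∈ Finset.Icc 1 (ℓ - 1), (c i) ^ 2)
        - 2 * (∑ i ∈ Finset.Icc 1 (ℓ - 2), c i * c (i + 1)) := by
    have key : ∀ i ∈ Finset.Icc (0:ℤ) (ℓ-1), (c (i+1) - c i)^2
        = c (i+1)^2 + (c i^2 - 2 * (c i * c (i+1))) := fun i _ => by ring
    rw [Finset.sum_congr rfl key, Finset.sum_add_distrib, Finset.sum_sub_distrib,
      ← Finset.mul_sum, shift (fun i => c i ^ 2), p1, p2, p3]
    ring
  rw [← hexp, hS]
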